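/- Let α : ℝ → ℝ be a locally Lipschitz extended class K function and let w : ℝ → ℝ be differentiable on [0, ∞) with w'(t) = -α(w(t)) for all t ≥ 0 and w(0) > 0. Then: (i) w(t) > 0 for all t ≥ 0; (ii) w is nonincreasing on [0, ∞), with 0 < w(t) ≤ w(0) for all t ≥ 0; and (iii) w(t) → 0 as t → ∞. -/

import Mathlib

open Set Filter

/-- The comparison ODE `ẇ = -α(w)` for a locally Lipschitz extended class K function `α`:
starting from `w 0 > 0`, the solution stays positive, is nonincreasing (so
`0 < w t ≤ w 0` on `[0,∞)`), and tends to `0` at infinity. -/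
theorem comparison_ode_flow
    (α : ℝ → ℝ) (hα_lip : LocallyLipschitz α) (hα_mono : StrictMono α) (hα_zero : α 0 = 0)
    (w : ℝ → ℝ)
    (hw : ∀ t : ℝ, 0 ≤ t → HasDerivWithinAt w (-α (w t)) (Set.Ici 0) t)
    (hw0 : 0 < w 0) :
    (∀ t : ℝ, 0 ≤ t → 0 < w t) ∧
    AntitoneOn w (Set.Ici 0) ∧
    (∀ t : ℝ, 0 ≤ t → 0 < w t ∧ w t ≤ w 0) ∧
    Tendsto w atTop (nhds 0) := by
  have hwc : ContinuousOn w (Set.Ici 0) := fun t ht => (hw t ht).continuousWithinAt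
  -- (i) positivity
  have hpos : ∀ t : ℝ, 0 ≤ t → 0 < w t := by
    by_contra h
    push_neg at h
    obtain ⟨t₁, ht₁, hwt₁⟩ := h
    -- the set of nonnegative times where w ≤ 0
    set Z : Set ℝ := {t | 0 ≤ t ∧ w t ≤ 0} with hZ
    have hZne : Z.Nonempty := ⟨t₁, ht₁, hwt₁⟩
    have hZbdd : BddBelow Z := ⟨0, fun t ht => ht.1⟩
    set t₀ := sInf Z with ht₀def
    have hZclosed : IsClosed Z := by
      have : Z = Set.Ici 0 ∩ w ⁻¹' (Set.Iic 0) := by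
        ext t; simp [hZ, Set.mem_setOf_eq, and_comm]
      rw [this]
      exact ContinuousOn.preimage_isClosed_of_isClosed hwc isClosed_Ici isClosed_Iic
    have ht₀Z : t₀ ∈ Z := hZclosed.csInf_mem hZne hZbdd
    have ht₀0 : 0 ≤ t₀ := ht₀Z.1
    have ht₀pos : 0 < t₀ := by
      rcases lt_or_eq_of_le ht₀0 with h' | h'
      · exact h'
      · exact absurd ht₀Z.2 (by rw [← h']; linarith)
    have hbefore : ∀ s : ℝ, 0 ≤ s → s < t₀ → 0 < w s := by
      intro s hs hst
      by_contra hc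
      push_neg at hc
      exact absurd (csInf_le hZbdd ⟨hs, hc⟩) (not_le.2 hst)
    -- w t₀ = 0
    have hwt₀ : w t₀ = 0 := by
      refine le_antisymm ht₀Z.2 ?_
      have htend : Filter.Tendsto w (nhdsWithin t₀ (Set.Ico 0 t₀)) (nhds (w t₀)) :=
        ((hwc t₀ ht₀0).mono Ico_subset_Ici_self)
      haveI hne : (nhdsWithin t₀ (Set.Ico 0 t₀)).NeBot := by
        apply mem_closure_iff_nhdsWithin_neBot.mp
        rw [closure_Ico (ne_of_lt ht₀pos)]
        exact ⟨ht₀0, le_refl _⟩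
      refine ge_of_tendsto htend ?_
      filter_upwards [self_mem_nhdsWithin] with s hs
      exact (hbefore s hs.1 hs.2).le
    -- Lipschitz neighborhood of 0
    obtain ⟨K, U, hU, hlip⟩ := hα_lip 0
    obtain ⟨ε, hε, hball⟩ := Metric.mem_nhds_iff.mp hU
    -- a small interval [a, t₀] where w stays in ball 0 ε
    have hwball : w ⁻¹' Metric.ball 0 ε ∈ nhdsWithin t₀ (Set.Ici 0) := by
      apply hwc t₀ ht₀0
      rw [hwt₀]
      exact Metric.ball_mem_nhds 0 hε
    have hnhds : w ⁻¹' Metric.ball 0 ε ∈ nhds t₀ := by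
      rwa [nhdsWithin_eq_nhds.mpr (Ici_mem_nhds ht₀pos)] at hwball
    obtain ⟨δ', hδ', hball'⟩ := Metric.mem_nhds_iff.mp hnhds
    set δ := min (δ' / 2) (t₀ / 2) with hδdef
    have hδpos : 0 < δ := lt_min (by linarith) (by linarith)
    set a := t₀ - δ with hadef
    have ha0 : 0 ≤ a := by
      have : δ ≤ t₀ / 2 := min_le_right _ _
      simp only [hadef]; linarith
    have hat₀ : a < t₀ := by simp only [hadef]; linarith
    have hmemball : ∀ t ∈ Set.Icc a t₀, w t ∈ Metric.ball 0 ε := by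
      intro t ht
      apply hball'
      rw [Metric.mem_ball, Real.dist_eq, abs_sub_lt_iff]
      have h1 : a ≤ t := ht.1
      have h2 : t ≤ t₀ := ht.2
      have hδ2 : δ ≤ δ' / 2 := min_le_left _ _
      constructor
      · linarith
      · rw [hadef] at h1; linarith
    -- uniqueness of ODE solutions, backwards from t₀
    have hlip' : ∀ t : ℝ, LipschitzOnWith K (fun x => -α x) (Metric.ball (0:ℝ) ε) := by
      intro t
      have : LipschitzOnWith K α (Metric.ball (0:ℝ) ε) := hlip.mono hball
      exact LipschitzOnWith.neg this
    have hw' : ∀ t ∈ Set.Ioc a t₀, HasDerivWithinAt w (-α (w t)) (Set.Iic t) t := by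
      intro t ht
      have ht0 : 0 < t := lt_of_le_of_lt ha0 ht.1
      exact ((hw t ht0.le).hasDerivAt (Ici_mem_nhds ht0)).hasDerivWithinAt
    have hg' : ∀ t ∈ Set.Ioc a t₀,
        HasDerivWithinAt (fun _ : ℝ => (0:ℝ)) (-α ((fun _ : ℝ => (0:ℝ)) t)) (Set.Iic t) t := by
      intro t _
      simp only [hα_zero, neg_zero]
      exact hasDerivWithinAt_const t _ 0
    have heq : Set.EqOn w (fun _ => (0:ℝ)) (Set.Icc a t₀) := by
      apply ODE_solution_unique_of_mem_Icc_left (v := fun _ x => -α x)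
        (s := fun _ => Metric.ball (0:ℝ) ε) (fun t _ => hlip' t)
        (hwc.mono (fun x hx => le_trans ha0 hx.1))
        hw' (fun t ht => hmemball t (Set.Ioc_subset_Icc_self ht))
        continuousOn_const hg' (fun t _ => by simpa using hε)
      simpa using hwt₀
    have : w a = 0 := heq ⟨le_refl a, hat₀.le⟩
    exact absurd this (ne_of_gt (hbefore a ha0 hat₀))
  -- (ii) antitone
  have hanti : AntitoneOn w (Set.Ici 0) := by
    apply antitoneOn_of_hasDerivWithinAt_nonpos (convex_Ici 0) hwc
      (f' := fun t => -α (w t))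
    · intro t ht
      rw [interior_Ici] at ht
      exact ((hw t ht.le).mono (by rw [interior_Ici]; exact Ioi_subset_Ici_self))
    · intro t ht
      rw [interior_Ici] at ht
      have : 0 < α (w t) := by
        rw [← hα_zero]
        exact hα_mono (hpos t ht.le)
      linarith
  have hbound : ∀ t : ℝ, 0 ≤ t → 0 < w t ∧ w t ≤ w 0 :=
    fun t ht => ⟨hpos t ht, hanti (Set.self_mem_Ici) ht ht⟩
  -- (iii) tendsto 0
  have hsmall : ∀ ε : ℝ, 0 < ε → ∃ T : ℝ, 0 ≤ T ∧ w T < ε := by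
    intro ε hε
    by_contra h
    push_neg at h
    have hge : ∀ t : ℝ, 0 ≤ t → ε ≤ w t := fun t ht => h t ht
    set c := α ε with hc
    have hcpos : 0 < c := by rw [hc, ← hα_zero]; exact hα_mono hε
    have huanti : AntitoneOn (fun t => w t + c * t) (Set.Ici 0) := by
      apply antitoneOn_of_hasDerivWithinAt_nonpos (convex_Ici 0)
        (f' := fun t => -α (w t) + c)
      · exact fun t ht => ((hw t ht).continuousWithinAt.add
          (continuous_const.mul continuous_id).continuousWithinAt)
      · intro t ht
        rw [interior_Ici] at ht
        have h1 : HasDerivWithinAt (fun s : ℝ => c * s) (c * 1) (interior (Set.Ici (0:ℝ))) t :=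
          ((hasDerivAt_id t).const_mul c).hasDerivWithinAt
        have h2 := ((hw t ht.le).mono (by rw [interior_Ici]; exact Ioi_subset_Ici_self)).add h1
        rw [interior_Ici]
        rw [interior_Ici] at h2
        simp only [mul_one] at h2; exact h2
      · intro t ht
        rw [interior_Ici] at ht
        have : c ≤ α (w t) := by
          rcases eq_or_lt_of_le (hge t ht.le) with h' | h'
          · rw [hc, h']
          · exact le_of_lt (hα_mono h')
        linarith
    set T := w 0 / c with hT
    have hT0 : 0 ≤ T := div_nonneg hw0.le hcpos.le
    have := huanti Set.self_mem_Ici hT0 hT0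
    simp only [mul_zero, add_zero] at this
    have hwT : w T ≤ w 0 - c * T := by linarith
    have : c * T = w 0 := by
      rw [hT]; field_simp
    have : w T ≤ 0 := by linarith
    linarith [hpos T hT0]
  have htend : Tendsto w atTop (nhds 0) := by
    rw [Metric.tendsto_atTop]
    intro ε hε
    obtain ⟨T, hT0, hwT⟩ := hsmall ε hε
    refine ⟨T, fun t ht => ?_⟩
    have ht0 : 0 ≤ t := hT0.trans ht
    rw [Real.dist_eq, sub_zero, abs_of_pos (hpos t ht0)]
    exact lt_of_le_of_lt (hanti hT0 ht0 ht) hwT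
  exact ⟨hpos, hanti, hbound, htend⟩
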